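/- arXiv:cond-mat/9906008 — 2 statements merged into one kernel-verified Lean document; each statement's English description precedes it below -/
import Mathlib

section
/- The Dyson–Lieb–Simon function f, defined by f(u·tanh(u)) = tanh(u)/u for u > 0, is convex on (0,∞). -/
open Real Set

namespace DLSaux

/-- even-form combination -/
noncomputable def Pe (A B C D E u : ℝ) : ℝ :=
  A * Real.cosh u + B * Real.cosh u * Real.sinh u ^ 2 + C * Real.cosh u ^ 3
    + D * (u * Real.sinh u) + E * (u ^ 2 * Real.cosh u)

/-- odd-form combination -/
noncomputable def Po (A B C D E u : ℝ) : ℝ :=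
  A * Real.sinh u + B * Real.sinh u ^ 3 + C * (Real.cosh u ^ 2 * Real.sinh u)
    + D * (u * Real.cosh u) + E * (u ^ 2 * Real.sinh u)

lemma hasDerivAt_Pe (A B C D E x : ℝ) :
    HasDerivAt (fun u => Pe A B C D E u)
      (Po (A + D) B (2 * B + 3 * C) (D + 2 * E) E x) x := by
  have hs := Real.hasDerivAt_sinh x
  have hc := Real.hasDerivAt_cosh x
  have h := ((((hc.const_mul A).add ((hc.mul (hs.pow 2)).const_mul B)).add
      ((hc.pow 3).const_mul C)).add (((hasDerivAt_id' (x:=x)).mul hs).const_mul D)).add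
      ((((hasDerivAt_pow 2 x)).mul hc).const_mul E)
  have heq : Po (A + D) B (2 * B + 3 * C) (D + 2 * E) E x
      = A * Real.sinh x + B * (Real.sinh x * Real.sinh x ^ 2 +
          Real.cosh x * (↑2 * Real.sinh x ^ 1 * Real.cosh x)) +
        C * (↑3 * Real.cosh x ^ 2 * Real.sinh x) +
        D * (1 * Real.sinh x + x * Real.cosh x) +
        E * ((↑2 * x ^ 1) * Real.cosh x + x ^ 2 * Real.sinh x) := by
    unfold Po; ring
  rw [heq]
  convert h using 2 with u
  · rfl
  · rfl
  · unfold Pe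
    simp only [Pi.add_apply, Pi.mul_apply, Pi.pow_apply]
    ring
  all_goals norm_num

lemma hasDerivAt_Po (A B C D E x : ℝ) :
    HasDerivAt (fun u => Po A B C D E u)
      (Pe (A + D) (3 * B + 2 * C) C (D + 2 * E) E x) x := by
  have hs := Real.hasDerivAt_sinh x
  have hc := Real.hasDerivAt_cosh x
  have h := ((((hs.const_mul A).add ((hs.pow 3).const_mul B)).add
      (((hc.pow 2).mul hs).const_mul C)).add (((hasDerivAt_id' (x:=x)).mul hc).const_mul D)).add
      ((((hasDerivAt_pow 2 x)).mul hs).const_mul E)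
  have heq : Pe (A + D) (3 * B + 2 * C) C (D + 2 * E) E x
      = A * Real.cosh x + B * (↑3 * Real.sinh x ^ 2 * Real.cosh x) +
        C * ((↑2 * Real.cosh x ^ 1 * Real.sinh x) * Real.sinh x + Real.cosh x ^ 2 * Real.cosh x) +
        D * (1 * Real.cosh x + x * Real.sinh x) +
        E * ((↑2 * x ^ 1) * Real.sinh x + x ^ 2 * Real.cosh x) := by
    unfold Pe; ring
  rw [heq]
  convert h using 2 with u
  · rfl
  · rfl
  · rfl
  all_goals norm_num


/-- generic positivity from nonneg derivative -/
lemma nonneg_of_deriv (F G : ℝ → ℝ) (hd : ∀ x ∈ Ici (0:ℝ), HasDerivAt F (G x) x)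
    (h0 : F 0 = 0) (hG : ∀ x ∈ Ici (0:ℝ), 0 ≤ G x) : ∀ x ∈ Ici (0:ℝ), 0 ≤ F x := by
  have mono : MonotoneOn F (Ici 0) := by
    apply monotoneOn_of_deriv_nonneg (convex_Ici 0)
    · exact fun x hx => (hd x hx).continuousAt.continuousWithinAt
    · intro x hx
      rw [interior_Ici] at hx
      exact (hd x (mem_Ici.2 (le_of_lt hx))).differentiableAt.differentiableWithinAt
    · intro x hx
      rw [interior_Ici] at hx
      rw [(hd x (mem_Ici.2 hx.le)).deriv]
      exact hG x (mem_Ici.2 hx.le)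
  intro x hx
  have := mono (self_mem_Ici) hx hx
  rwa [h0] at this

lemma sinh_le_mul_cosh {x : ℝ} (hx : 0 ≤ x) : Real.sinh x ≤ x * Real.cosh x := by
  have h := nonneg_of_deriv (fun u => u * Real.cosh u - Real.sinh u)
    (fun u => u * Real.sinh u) ?_ (by simp) ?_ x hx
  · simp only [sub_nonneg] at h; exact h
  · intro u _
    have h := ((hasDerivAt_id' (x:=u)).mul (Real.hasDerivAt_cosh u)).sub (Real.hasDerivAt_sinh u)
    convert h using 1
    · rfl
    · rfl
    · rfl
    ring
  · intro u hu
    exact mul_nonneg hu (Real.sinh_nonneg_iff.2 hu)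



lemma chain_even (A B C D E A' B' C' D' E' : ℝ) (h1 : A' = A + D) (h2 : B' = B)
    (h3 : C' = 2 * B + 3 * C) (h4 : D' = D + 2 * E) (h5 : E' = E) (h0 : A + C = 0)
    (h : ∀ x ∈ Ici (0:ℝ), 0 ≤ Po A' B' C' D' E' x) :
    ∀ x ∈ Ici (0:ℝ), 0 ≤ Pe A B C D E x := by
  rw [h1, h2, h3, h4, h5] at h
  refine nonneg_of_deriv _ _ (fun x _ => hasDerivAt_Pe A B C D E x) ?_ h
  unfold Pe
  simp [Real.cosh_zero, Real.sinh_zero]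
  linarith

lemma chain_odd (A B C D E A' B' C' D' E' : ℝ) (h1 : A' = A + D) (h2 : B' = 3 * B + 2 * C)
    (h3 : C' = C) (h4 : D' = D + 2 * E) (h5 : E' = E)
    (h : ∀ x ∈ Ici (0:ℝ), 0 ≤ Pe A' B' C' D' E' x) :
    ∀ x ∈ Ici (0:ℝ), 0 ≤ Po A B C D E x := by
  rw [h1, h2, h3, h4, h5] at h
  refine nonneg_of_deriv _ _ (fun x _ => hasDerivAt_Po A B C D E x) ?_ h
  unfold Po
  simp [Real.cosh_zero, Real.sinh_zero]

lemma T6_nonneg : ∀ x ∈ Ici (0:ℝ), 0 ≤ Pe (-54) 547 182 (-23) (-2) x := by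
  intro x hx
  rw [mem_Ici] at hx
  have hc : (0:ℝ) < Real.cosh x := Real.cosh_pos x
  have hs : x ≤ Real.sinh x := Real.self_le_sinh_iff.2 hx
  have hsc : Real.sinh x ≤ x * Real.cosh x := sinh_le_mul_cosh hx
  have hcs : Real.cosh x ^ 2 = Real.sinh x ^ 2 + 1 := Real.cosh_sq x
  have hs0 : 0 ≤ Real.sinh x := le_trans hx hs
  have hc3 : Real.cosh x ^ 3 = Real.cosh x * Real.sinh x ^ 2 + Real.cosh x := by
    linear_combination Real.cosh x * hcs
  have f1 : x * Real.sinh x ≤ x * (x * Real.cosh x) := mul_le_mul_of_nonneg_left hsc hx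
  have f2 : x ^ 2 ≤ Real.sinh x ^ 2 := by nlinarith
  have f3 : Real.cosh x * x ^ 2 ≤ Real.cosh x * Real.sinh x ^ 2 :=
    mul_le_mul_of_nonneg_left f2 hc.le
  have f4 : 0 ≤ Real.cosh x * x ^ 2 := mul_nonneg hc.le (sq_nonneg x)
  unfold Pe
  nlinarith [f1, f3, f4, hc3, hc]

lemma T0_nonneg : ∀ x ∈ Ici (0:ℝ), 0 ≤ Pe 0 1 0 1 (-2) x :=
  chain_even 0 1 0 1 (-2) 1 1 2 (-3) (-2)
    (by norm_num) (by norm_num) (by norm_num) (by norm_num) (by norm_num) (by norm_num) <|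
  chain_odd 1 1 2 (-3) (-2) (-2) 7 2 (-7) (-2)
    (by norm_num) (by norm_num) (by norm_num) (by norm_num) (by norm_num) <|
  chain_even (-2) 7 2 (-7) (-2) (-9) 7 20 (-11) (-2)
    (by norm_num) (by norm_num) (by norm_num) (by norm_num) (by norm_num) (by norm_num) <|
  chain_odd (-9) 7 20 (-11) (-2) (-20) 61 20 (-15) (-2)
    (by norm_num) (by norm_num) (by norm_num) (by norm_num) (by norm_num) <|
  chain_even (-20) 61 20 (-15) (-2) (-35) 61 182 (-19) (-2)
    (by norm_num) (by norm_num) (by norm_num) (by norm_num) (by norm_num) (by norm_num) <|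
  chain_odd (-35) 61 182 (-19) (-2) (-54) 547 182 (-23) (-2)
    (by norm_num) (by norm_num) (by norm_num) (by norm_num) (by norm_num) <|
  T6_nonneg



noncomputable def X (u : ℝ) : ℝ := u * Real.sinh u / Real.cosh u
noncomputable def Y (u : ℝ) : ℝ := Real.sinh u / (u * Real.cosh u)
noncomputable def M (u : ℝ) : ℝ :=
  (u - Real.sinh u * Real.cosh u) / (u ^ 2 * (u + Real.sinh u * Real.cosh u))

noncomputable def Xd (u : ℝ) : ℝ := (Real.sinh u * Real.cosh u + u) / Real.cosh u ^ 2

lemma hasDerivAt_X (u : ℝ) : HasDerivAt X (Xd u) u := by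
  have h := (((hasDerivAt_id' (x := u)).mul (Real.hasDerivAt_sinh u)).div
    (Real.hasDerivAt_cosh u) (ne_of_gt (Real.cosh_pos u)))
  convert h using 1
  · rfl
  · rfl
  · rfl
  unfold Xd
  simp only [Pi.mul_apply]
  rw [div_eq_div_iff (pow_ne_zero 2 (ne_of_gt (Real.cosh_pos u)))
    (pow_ne_zero 2 (ne_of_gt (Real.cosh_pos u)))]
  linear_combination (-u * Real.cosh u ^ 2) * Real.cosh_sq_sub_sinh_sq u

lemma Xd_pos {u : ℝ} (hu : 0 < u) : 0 < Xd u := by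
  unfold Xd
  have hs : 0 < Real.sinh u := Real.sinh_pos_iff.2 hu
  have hc : 0 < Real.cosh u := Real.cosh_pos u
  positivity

noncomputable def Yd (u : ℝ) : ℝ := (u - Real.sinh u * Real.cosh u) / (u ^ 2 * Real.cosh u ^ 2)

lemma hasDerivAt_Y {u : ℝ} (hu : 0 < u) : HasDerivAt Y (Yd u) u := by
  have hden : u * Real.cosh u ≠ 0 := by positivity
  have h := (Real.hasDerivAt_sinh u).div
    ((hasDerivAt_id' (x := u)).mul (Real.hasDerivAt_cosh u)) hden
  convert h using 1
  · rfl
  · rfl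
  · rfl
  unfold Yd
  simp only [Pi.mul_apply]
  have h1 : u ^ 2 * Real.cosh u ^ 2 ≠ 0 := by positivity
  have h2 : (u * Real.cosh u) ^ 2 ≠ 0 := by positivity
  rw [div_eq_div_iff h1 h2]
  linear_combination (-(u ^ 3) * Real.cosh u ^ 2) * Real.cosh_sq_sub_sinh_sq u

lemma Yd_eq_M_mul_Xd {u : ℝ} (hu : 0 < u) : Yd u = M u * Xd u := by
  have hs : 0 < Real.sinh u := Real.sinh_pos_iff.2 hu
  have hc : 0 < Real.cosh u := Real.cosh_pos u
  have hg : 0 < u + Real.sinh u * Real.cosh u := by positivity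
  unfold Yd M Xd
  field_simp
  ring

lemma hasDerivAt_M {u : ℝ} (hu : 0 < u) :
    HasDerivAt M (2 * u * Real.cosh u * Pe 0 1 0 1 (-2) u
      / (u ^ 2 * (u + Real.sinh u * Real.cosh u)) ^ 2) u := by
  have hs : 0 < Real.sinh u := Real.sinh_pos_iff.2 hu
  have hc : 0 < Real.cosh u := Real.cosh_pos u
  have hden : u ^ 2 * (u + Real.sinh u * Real.cosh u) ≠ 0 := by positivity
  have hN : HasDerivAt (fun v => v - Real.sinh v * Real.cosh v)
      (1 - (Real.cosh u * Real.cosh u + Real.sinh u * Real.sinh u)) u :=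
    (hasDerivAt_id' (x := u)).sub ((Real.hasDerivAt_sinh u).mul (Real.hasDerivAt_cosh u))
  have hD : HasDerivAt (fun v => v ^ 2 * (v + Real.sinh v * Real.cosh v))
      ((2 * u ^ 1) * (u + Real.sinh u * Real.cosh u)
        + u ^ 2 * (1 + (Real.cosh u * Real.cosh u + Real.sinh u * Real.sinh u))) u := by
    have := (hasDerivAt_pow 2 u).mul
      ((hasDerivAt_id' (x := u)).add ((Real.hasDerivAt_sinh u).mul (Real.hasDerivAt_cosh u)))
    convert this using 1
    · rfl
    · rfl
    · rfl
    norm_num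
  have h := hN.div hD hden
  convert h using 1
  · rfl
  · rfl
  · rfl
  rw [div_eq_div_iff (pow_ne_zero 2 hden) (pow_ne_zero 2 hden)]
  unfold Pe
  linear_combination (-2 * u ^ 7 * (u + Real.sinh u * Real.cosh u) ^ 2)
    * Real.cosh_sq_sub_sinh_sq u



lemma M_mono : MonotoneOn M (Ioi (0:ℝ)) := by
  apply monotoneOn_of_deriv_nonneg (convex_Ioi 0)
  · exact fun x hx => (hasDerivAt_M hx).continuousAt.continuousWithinAt
  · intro x hx
    rw [interior_Ioi] at hx
    exact (hasDerivAt_M hx).differentiableAt.differentiableWithinAt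
  · intro x hx
    rw [interior_Ioi] at hx
    rw [(hasDerivAt_M hx).deriv]
    apply div_nonneg _ (sq_nonneg _)
    have hT := T0_nonneg x (mem_Ici.2 (le_of_lt hx))
    have hc := Real.cosh_pos x
    have h2x : (0:ℝ) ≤ 2 * x := by have := mem_Ioi.mp hx; linarith
    exact mul_nonneg (mul_nonneg h2x hc.le) hT

/-- the supporting-line inequality -/
lemma support {a b : ℝ} (ha : 0 < a) (hb : 0 < b) :
    Y a + M a * (X b - X a) ≤ Y b := by
  set F : ℝ → ℝ := fun u => Y u - M a * X u with hF
  have hdF : ∀ u, 0 < u → HasDerivAt F (Xd u * (M u - M a)) u := by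
    intro u hu
    have h := (hasDerivAt_Y hu).sub ((hasDerivAt_X u).const_mul (M a))
    convert h using 1
    · rfl
    · rfl
    · rfl
    rw [Yd_eq_M_mul_Xd hu]
    ring
  have key : F a ≤ F b := by
    rcases le_total a b with hab | hab
    · have mono : MonotoneOn F (Icc a b) := by
        apply monotoneOn_of_deriv_nonneg (convex_Icc a b)
        · intro x hx
          exact (hdF x (lt_of_lt_of_le ha hx.1)).continuousAt.continuousWithinAt
        · intro x hx
          rw [interior_Icc] at hx
          exact (hdF x (lt_of_lt_of_le ha hx.1.le)).differentiableAt.differentiableWithinAt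
        · intro x hx
          rw [interior_Icc] at hx
          have hx0 : 0 < x := lt_trans ha hx.1
          rw [(hdF x hx0).deriv]
          have hM : M a ≤ M x := M_mono (mem_Ioi.2 ha) (mem_Ioi.2 hx0) hx.1.le
          exact mul_nonneg (Xd_pos hx0).le (by linarith)
      exact mono (left_mem_Icc.2 hab) (right_mem_Icc.2 hab) hab
    · have anti : AntitoneOn F (Icc b a) := by
        apply antitoneOn_of_deriv_nonpos (convex_Icc b a)
        · intro x hx
          exact (hdF x (lt_of_lt_of_le hb hx.1)).continuousAt.continuousWithinAt
        · intro x hx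
          rw [interior_Icc] at hx
          exact (hdF x (lt_of_lt_of_le hb hx.1.le)).differentiableAt.differentiableWithinAt
        · intro x hx
          rw [interior_Icc] at hx
          have hx0 : 0 < x := lt_trans hb hx.1
          rw [(hdF x hx0).deriv]
          have hM : M x ≤ M a := M_mono (mem_Ioi.2 hx0) (mem_Ioi.2 ha) hx.2.le
          exact mul_nonpos_of_nonneg_of_nonpos (Xd_pos hx0).le (by linarith)
      exact anti (left_mem_Icc.2 hab) (right_mem_Icc.2 hab) hab
  simp only [hF] at key
  linarith

lemma X_cont : Continuous X := by
  unfold X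
  exact (continuous_id.mul Real.continuous_sinh).div Real.continuous_cosh
    (fun x => ne_of_gt (Real.cosh_pos x))

lemma X_le_sq {u : ℝ} (hu : 0 ≤ u) : X u ≤ u ^ 2 := by
  unfold X
  rw [div_le_iff₀ (Real.cosh_pos u)]
  have h := sinh_le_mul_cosh hu
  have hc := Real.cosh_pos u
  nlinarith [mul_le_mul_of_nonneg_left h hu]

lemma X_surj {z : ℝ} (hz : 0 < z) : ∃ a : ℝ, 0 < a ∧ X a = z := by
  set δ : ℝ := min 1 (Real.sqrt z) with hδdef
  have hδpos : 0 < δ := lt_min one_pos (Real.sqrt_pos.2 hz)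
  have hδle : δ ≤ z + 1 := le_trans (min_le_left _ _) (by linarith)
  have hXδ : X δ ≤ z := by
    refine le_trans (X_le_sq hδpos.le) ?_
    have h1 : δ ≤ Real.sqrt z := min_le_right _ _
    calc δ ^ 2 ≤ Real.sqrt z ^ 2 := by
          exact pow_le_pow_left₀ hδpos.le h1 2
      _ = z := Real.sq_sqrt hz.le
  have hXu : z ≤ X (z + 1) := by
    have hu : (0:ℝ) < z + 1 := by linarith
    have hs : z + 1 ≤ Real.sinh (z + 1) := Real.self_le_sinh_iff.2 hu.le
    have hcs : Real.cosh (z + 1) ≤ Real.sinh (z + 1) + 1 := by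
      have := Real.cosh_sub_sinh (z + 1)
      have he : Real.exp (-(z + 1)) ≤ 1 := Real.exp_le_one_iff.2 (by linarith)
      linarith
    have hc := Real.cosh_pos (z + 1)
    unfold X
    rw [le_div_iff₀ hc]
    nlinarith
  have := intermediate_value_Icc hδle (X_cont.continuousOn)
  have hzmem : z ∈ Icc (X δ) (X (z + 1)) := ⟨hXδ, hXu⟩
  obtain ⟨a, ha, haz⟩ := this hzmem
  exact ⟨a, lt_of_lt_of_le hδpos ha.1, haz⟩

lemma X_eq (u : ℝ) : u * Real.tanh u = X u := by
  rw [Real.tanh_eq_sinh_div_cosh]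
  unfold X
  ring

lemma Y_eq (u : ℝ) : Real.tanh u / u = Y u := by
  rw [Real.tanh_eq_sinh_div_cosh]
  unfold Y
  rw [div_div]
  ring_nf

end DLSaux

/-- The DLS function `f`, defined by `f (u * tanh u) = tanh u / u` for `u > 0`,
is convex on `(0,∞)`. -/
theorem dls_convex (f : ℝ → ℝ)
    (hf : ∀ u : ℝ, 0 < u → f (u * Real.tanh u) = Real.tanh u / u) :
    ConvexOn ℝ (Set.Ioi 0) f := by
  constructor
  · exact convex_Ioi 0
  intro p hp q hq α β hα hβ hαβ
  rw [Set.mem_Ioi] at hp hq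
  simp only [smul_eq_mul]
  set z := α * p + β * q with hz
  have hzpos : 0 < z := by
    rcases eq_or_lt_of_le hα with h0 | h0
    · simp [hz, ← h0]; nlinarith
    · nlinarith
  obtain ⟨a, ha, haz⟩ := DLSaux.X_surj hzpos
  obtain ⟨b, hb, hbp⟩ := DLSaux.X_surj hp
  obtain ⟨c, hc, hcq⟩ := DLSaux.X_surj hq
  have hfz : f z = DLSaux.Y a := by
    rw [← haz, ← DLSaux.X_eq a, hf a ha, DLSaux.Y_eq]
  have hfp : f p = DLSaux.Y b := by
    rw [← hbp, ← DLSaux.X_eq b, hf b hb, DLSaux.Y_eq]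
  have hfq : f q = DLSaux.Y c := by
    rw [← hcq, ← DLSaux.X_eq c, hf c hc, DLSaux.Y_eq]
  have h1 : DLSaux.Y a + DLSaux.M a * (DLSaux.X b - DLSaux.X a) ≤ DLSaux.Y b :=
    DLSaux.support ha hb
  have h2 : DLSaux.Y a + DLSaux.M a * (DLSaux.X c - DLSaux.X a) ≤ DLSaux.Y c :=
    DLSaux.support ha hc
  rw [hfz, hfp, hfq]
  rw [hbp] at h1
  rw [hcq] at h2
  rw [hz] at haz
  have h3 : α * (DLSaux.M a * (p - DLSaux.X a)) + β * (DLSaux.M a * (q - DLSaux.X a)) = 0 := by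
    linear_combination (-DLSaux.M a) * haz + (-(DLSaux.M a * DLSaux.X a)) * hαβ
  have h4 : α * DLSaux.Y a + β * DLSaux.Y a = DLSaux.Y a := by
    linear_combination DLSaux.Y a * hαβ
  have s1 := mul_le_mul_of_nonneg_left h1 hα
  have s2 := mul_le_mul_of_nonneg_left h2 hβ
  rw [mul_add] at s1 s2
  linarith [s1, s2, h3, h4]
end

section
/- Let h : positive reals → positive reals and suppose ⟨ρ⟩ ≥ |Λ|·δ for some δ > 0. If κ√⟨s⟩ ≥ g√(⟨ρ⟩·f(4βd/⟨ρ⟩)) − √(κ/β) with f the DLS function (f continuous at 0+ with limit 1), then for |Λ| large enough, ⟨s⟩ ≥ |Λ|·(g²δ/(2κ²)) − o(|Λ|); in particular ⟨s⟩ grows proportionally to |Λ|, i.e. long-range order in ρ implies long-range order in s. -/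
open Filter

set_option maxHeartbeats 1000000 in
/-- Long-range order in `ρ` implies long-range order in `s`: with the DLS
function `f` (decreasing, with values in `(0,1)` and limit `1` at `0⁺`), if
`⟨ρ⟩ ≥ δ|Λ|` and `κ√⟨s⟩ ≥ g√(⟨ρ⟩ f(4βd/⟨ρ⟩)) − √(κ/β)`, then for `|Λ|`
large enough `⟨s⟩ ≥ (g²δ/(2κ²))|Λ|`, i.e. `⟨s⟩` grows proportionally to `|Λ|`. -/
theorem lro_transfer (f : ℝ → ℝ)
    (hf_mem : ∀ t : ℝ, 0 < t → f t ∈ Set.Ioo (0 : ℝ) 1)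
    (hf_anti : StrictAntiOn f (Set.Ioi 0))
    (hf_lim : Tendsto f (nhdsWithin 0 (Set.Ioi 0)) (nhds 1))
    (κ g β d δ : ℝ) (hκ : 0 < κ) (hg : 0 < g) (hβ : 0 < β) (hd : 0 < d)
    (hδ : 0 < δ) (s ρ : ℕ → ℝ) (hs : ∀ V, 0 ≤ s V)
    (hρ : ∀ V : ℕ, δ * V ≤ ρ V)
    (hineq : ∀ V : ℕ,
      g * Real.sqrt (ρ V * f (4 * β * d / ρ V)) - Real.sqrt (κ / β)
        ≤ κ * Real.sqrt (s V)) :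
    ∃ V₀ : ℕ, ∀ V : ℕ, V₀ ≤ V → (g ^ 2 * δ / (2 * κ ^ 2)) * V ≤ s V := by
  have h34 : ∀ᶠ t in nhdsWithin 0 (Set.Ioi 0), (3/4 : ℝ) < f t :=
    hf_lim.eventually (eventually_gt_nhds (by norm_num))
  rw [eventually_nhdsWithin_iff, Metric.eventually_nhds_iff] at h34
  obtain ⟨t₀, ht₀, hft⟩ := h34
  set c : ℝ := Real.sqrt (3/4) - Real.sqrt (1/2) with hc
  have hcpos : 0 < c := sub_pos.2 (Real.sqrt_lt_sqrt (by norm_num) (by norm_num))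
  set A : ℝ := Real.sqrt (κ/β) / (g * c) with hA
  have hAnn : 0 ≤ A := div_nonneg (Real.sqrt_nonneg _) (by positivity)
  obtain ⟨N₁, hN₁⟩ := exists_nat_gt (4*β*d/(t₀*δ))
  obtain ⟨N₂, hN₂⟩ := exists_nat_gt (A^2/δ)
  refine ⟨max N₁ N₂, fun V hV => ?_⟩
  have hV1 : (4*β*d/(t₀*δ) : ℝ) < V :=
    lt_of_lt_of_le hN₁ (by exact_mod_cast le_trans (le_max_left _ _) hV)
  have hV2 : (A^2/δ : ℝ) < V :=
    lt_of_lt_of_le hN₂ (by exact_mod_cast le_trans (le_max_right _ _) hV)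
  have hbd : 0 < 4*β*d/(t₀*δ) := by positivity
  have hVpos : (0:ℝ) < V := lt_trans hbd hV1
  have hρpos : 0 < ρ V := lt_of_lt_of_le (by positivity) (hρ V)
  have hρlb : 4*β*d/t₀ < ρ V := by
    refine lt_of_lt_of_le ?_ (hρ V)
    rw [div_lt_iff₀ ht₀]
    have h := (div_lt_iff₀ (by positivity : (0:ℝ) < t₀*δ)).mp hV1
    nlinarith
  set t : ℝ := 4*β*d/(ρ V) with htdef
  have htpos : 0 < t := by positivity
  have htlt : t < t₀ := by
    rw [htdef, div_lt_iff₀ hρpos]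
    rw [div_lt_iff₀ ht₀] at hρlb
    nlinarith
  have hf34 : (3/4 : ℝ) < f t := by
    apply hft (y := t)
    · rw [Real.dist_eq, sub_zero, abs_of_pos htpos]; exact htlt
    · exact htpos
  -- √(ρ f t) ≥ √ρ √(3/4)
  have hsq1 : Real.sqrt (ρ V) * Real.sqrt (3/4) ≤ Real.sqrt (ρ V * f t) := by
    rw [← Real.sqrt_mul (le_of_lt hρpos)]
    exact Real.sqrt_le_sqrt (by nlinarith)
  -- A < √ρ
  have hρA : A^2 < ρ V := by
    have := (div_lt_iff₀ hδ).mp hV2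
    nlinarith [hρ V]
  have hAsq : A < Real.sqrt (ρ V) := by
    rw [show A = Real.sqrt (A^2) from (Real.sqrt_sq hAnn).symm]
    exact Real.sqrt_lt_sqrt (by positivity) hρA
  have hκβ : Real.sqrt (κ/β) ≤ g * c * Real.sqrt (ρ V) := by
    have : Real.sqrt (κ/β) = g * c * A := by
      rw [hA]; field_simp
    rw [this]
    exact mul_le_mul_of_nonneg_left (le_of_lt hAsq) (by positivity)
  -- main chain
  have hchain : g * Real.sqrt (δ * V) * Real.sqrt (1/2) ≤ κ * Real.sqrt (s V) := by
    have h1 : g * Real.sqrt (δ * V) * Real.sqrt (1/2)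
        ≤ g * Real.sqrt (ρ V) * Real.sqrt (1/2) := by
      have h := Real.sqrt_le_sqrt (hρ V)
      gcongr
    have h2 : g * Real.sqrt (ρ V) * Real.sqrt (1/2)
        ≤ g * (Real.sqrt (ρ V) * Real.sqrt (3/4)) - Real.sqrt (κ/β) := by
      have hcc : Real.sqrt (1/2) = Real.sqrt (3/4) - c := by rw [hc]; ring
      rw [hcc]
      have he : g * Real.sqrt (ρ V) * (Real.sqrt (3/4) - c)
          = g * (Real.sqrt (ρ V) * Real.sqrt (3/4)) - g * c * Real.sqrt (ρ V) := by ring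
      rw [he]
      linarith [hκβ]
    have h3 : g * (Real.sqrt (ρ V) * Real.sqrt (3/4)) - Real.sqrt (κ/β)
        ≤ g * Real.sqrt (ρ V * f t) - Real.sqrt (κ/β) := by
      exact sub_le_sub_right (mul_le_mul_of_nonneg_left hsq1 hg.le) _
    calc g * Real.sqrt (δ * V) * Real.sqrt (1/2) ≤ _ := h1
      _ ≤ _ := h2
      _ ≤ _ := h3
      _ ≤ κ * Real.sqrt (s V) := hineq V
  -- square both sides
  have hLnn : 0 ≤ g * Real.sqrt (δ * V) * Real.sqrt (1/2) := by positivity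
  have hsqL : (g * Real.sqrt (δ * V) * Real.sqrt (1/2))^2 = g^2 * (δ * V) * (1/2) := by
    rw [mul_pow, mul_pow, Real.sq_sqrt (by positivity : (0:ℝ) ≤ δ * V),
      Real.sq_sqrt (by norm_num : (0:ℝ) ≤ (1/2:ℝ))]
  have hsqR : (κ * Real.sqrt (s V))^2 = κ^2 * s V := by
    rw [mul_pow, Real.sq_sqrt (hs V)]
  have hfinal : g^2 * (δ * V) * (1/2) ≤ κ^2 * s V := by
    rw [← hsqL, ← hsqR]
    exact pow_le_pow_left₀ hLnn hchain 2
  rw [div_mul_eq_mul_div, div_le_iff₀ (by positivity)]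
  nlinarith [hfinal]
end
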